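/- Let μ_X, μ_Y : (0,∞) → (0,∞) be continuous with ∫₀ᵗ μ_X, ∫₀ᵗ μ_Y positive and finite for all t > 0. If L_X(t) ≤ L_Y(t) and L_Y(t) ≤ L_X(t) for all t > 0, then there exists a constant c > 0 such that μ_X(t) = c·μ_Y(t) for all t > 0. -/

import Mathlib

/-- If L_X ≤ L_Y and L_Y ≤ L_X on (0,∞), then μ_X and μ_Y are
proportional. -/
theorem mrlai_antisymm_proportional (μX μY : ℝ → ℝ)
    (hcX : ContinuousOn μX (Set.Ioi 0)) (hcY : ContinuousOn μY (Set.Ioi 0))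
    (hpX : ∀ t > (0:ℝ), 0 < μX t) (hpY : ∀ t > (0:ℝ), 0 < μY t)
    (hiX : ∀ t > (0:ℝ), IntervalIntegrable μX MeasureTheory.volume 0 t)
    (hiY : ∀ t > (0:ℝ), IntervalIntegrable μY MeasureTheory.volume 0 t)
    (hGX : ∀ t > (0:ℝ), 0 < ∫ u in (0:ℝ)..t, μX u)
    (hGY : ∀ t > (0:ℝ), 0 < ∫ u in (0:ℝ)..t, μY u)
    (hXY : ∀ t > (0:ℝ),
      t * μX t / (∫ u in (0:ℝ)..t, μX u) ≤ t * μY t / (∫ u in (0:ℝ)..t, μY u))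
    (hYX : ∀ t > (0:ℝ),
      t * μY t / (∫ u in (0:ℝ)..t, μY u) ≤ t * μX t / (∫ u in (0:ℝ)..t, μX u)) :
    ∃ c > (0:ℝ), ∀ t > (0:ℝ), μX t = c * μY t := by
  set GX : ℝ → ℝ := fun t => ∫ u in (0:ℝ)..t, μX u with hGXdef
  set GY : ℝ → ℝ := fun t => ∫ u in (0:ℝ)..t, μY u with hGYdef
  -- key algebraic identity
  have key : ∀ t > (0:ℝ), μX t * GY t = μY t * GX t := by
    intro t ht
    have h1 := le_antisymm (hXY t ht) (hYX t ht)
    have hGXt := hGX t ht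
    have hGYt := hGY t ht
    rw [div_eq_div_iff (ne_of_gt hGXt) (ne_of_gt hGYt)] at h1
    have := mul_left_cancel₀ (ne_of_gt ht) (by linarith : t * (μX t * GY t) = t * (μY t * GX t))
    linarith
  -- derivatives of GX, GY on (0,∞)
  have hdX : ∀ t ∈ Set.Ioi (0:ℝ), HasDerivAt GX (μX t) t := fun t ht =>
    intervalIntegral.integral_hasDerivAt_right (hiX t ht)
      (hcX.stronglyMeasurableAtFilter isOpen_Ioi t ht)
      (hcX.continuousAt (isOpen_Ioi.mem_nhds ht))
  have hdY : ∀ t ∈ Set.Ioi (0:ℝ), HasDerivAt GY (μY t) t := fun t ht =>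
    intervalIntegral.integral_hasDerivAt_right (hiY t ht)
      (hcY.stronglyMeasurableAtFilter isOpen_Ioi t ht)
      (hcY.continuousAt (isOpen_Ioi.mem_nhds ht))
  set F : ℝ → ℝ := fun t => GX t / GY t with hFdef
  have hdF : ∀ t ∈ Set.Ioi (0:ℝ), HasDerivAt F 0 t := by
    intro t ht
    have hne : GY t ≠ 0 := ne_of_gt (hGY t ht)
    have := (hdX t ht).div (hdY t ht) hne
    have h0 : (μX t * GY t - GX t * μY t) / GY t ^ 2 = 0 := by
      rw [key t ht]
      ring
    rw [h0] at this
    exact this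
  -- F is constant on (0,∞)
  have hdiff : DifferentiableOn ℝ F (Set.Ioi 0) := fun t ht =>
    (hdF t ht).differentiableAt.differentiableWithinAt
  have hfd0 : ∀ t ∈ Set.Ioi (0:ℝ), fderivWithin ℝ F (Set.Ioi 0) t = 0 := by
    intro t ht
    rw [fderivWithin_of_isOpen isOpen_Ioi ht]
    have : deriv F t = 0 := (hdF t ht).deriv
    ext
    simp [fderiv_eq_smul_deriv, this]
  have hconst : ∀ t ∈ Set.Ioi (0:ℝ), F t = F 1 := fun t ht =>
    (convex_Ioi (0:ℝ)).is_const_of_fderivWithin_eq_zero hdiff hfd0 ht (by norm_num)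
  refine ⟨F 1, div_pos (hGX 1 one_pos) (hGY 1 one_pos), fun t ht => ?_⟩
  have hGYt := hGY t ht
  have hk := key t ht
  have : μX t = (GX t / GY t) * μY t := by
    rw [div_mul_eq_mul_div, eq_div_iff (ne_of_gt hGYt)]
    linarith
  rw [this, show GX t / GY t = F 1 from hconst t ht]
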